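/- If 𝔟 ≥ ω₂ then there are no Nwd-Luzin families (equivalently, no Nwd_tr-Luzin families of subsets of 2^{<ω}). -/

import Mathlib

open Set Cardinal

/-- The unbounding number 𝔟. -/
noncomputable def bNumber : Cardinal :=
  sInf {c | ∃ U : Set (ℕ → ℕ), Cardinal.mk U = c ∧
    ∀ g : ℕ → ℕ, ∃ f ∈ U, {n | g n < f n}.Infinite}

/-- `A ⊆ 2^{<ω}` is nowhere dense in the tree of finite binary strings. -/
def IsNwdTree (A : Set (List Bool)) : Prop :=
  ∀ s : List Bool, ∃ t : List Bool, s <+: t ∧ ∀ u ∈ A, ¬ t <+: u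

namespace S18

/-- The first `n` values of `x` as a list. -/
def listOf (x : ℕ → Bool) (n : ℕ) : List Bool := List.ofFn (fun i : Fin n => x i)

@[simp] lemma listOf_length (x : ℕ → Bool) (n : ℕ) : (listOf x n).length = n := by
  simp [listOf]

lemma listOf_succ (x : ℕ → Bool) (n : ℕ) : listOf x (n + 1) = listOf x n ++ [x n] := by
  rw [listOf, listOf, List.ofFn_succ', List.concat_eq_append]
  rfl

lemma listOf_getElem (x : ℕ → Bool) {n i : ℕ} (h : i < (listOf x n).length) :
    (listOf x n)[i] = x i :=
  by simp [listOf]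

lemma listOf_prefix (x : ℕ → Bool) {n m : ℕ} (h : n ≤ m) : listOf x n <+: listOf x m := by
  induction m with
  | zero => simp_all [Nat.le_zero.mp h]
  | succ m ih =>
    rcases Nat.lt_or_ge n (m+1) with h' | h'
    · exact ((ih (Nat.lt_succ_iff.mp h')).trans (by rw [listOf_succ]; exact List.prefix_append _ _))
    · have : n = m + 1 := le_antisymm h h'
      subst this; exact List.prefix_refl _

lemma agrees_of_prefix {x : ℕ → Bool} {t : List Bool} {n : ℕ} (h : t <+: listOf x n) :
    listOf x t.length = t := by
  have hlen : t.length ≤ n := by simpa using h.length_le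
  have h2 := listOf_prefix x hlen
  rw [List.prefix_iff_eq_take] at h h2
  rw [h2, listOf_length, ← h]

lemma exists_branch {X : Set (List Bool)} (hX : X.Infinite) :
    ∃ x : ℕ → Bool, ∀ n, {u ∈ X | listOf x n <+: u}.Infinite := by
  set P : List Bool → Prop := fun s => {u ∈ X | s <+: u}.Infinite with hP
  have hP0 : P [] := by
    have : {u ∈ X | [] <+: u} = X := by ext u; simp
    show {u ∈ X | [] <+: u}.Infinite
    rw [this]; exact hX
  have step : ∀ s, P s → ∃ b, P (s ++ [b]) := by
    intro s hs
    by_contra hcon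
    push_neg at hcon
    have hf : ∀ b, {u ∈ X | s ++ [b] <+: u}.Finite := by
      intro b
      have := hcon b
      simpa [hP, Set.not_infinite] using this
    have hsub : {u ∈ X | s <+: u} ⊆
        {s} ∪ ({u ∈ X | s ++ [false] <+: u} ∪ {u ∈ X | s ++ [true] <+: u}) := by
      rintro u ⟨huX, hpre⟩
      rcases hpre with ⟨r, rfl⟩
      cases r with
      | nil => left; simp
      | cons b r' =>
        right
        cases b with
        | false => left; exact ⟨huX, by simp⟩
        | true => right; exact ⟨huX, by simp⟩
    have : {u ∈ X | s <+: u}.Finite :=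
      Set.Finite.subset ((Set.finite_singleton s).union ((hf false).union (hf true))) hsub
    exact hs this
  let next : {s : List Bool // P s} → {s : List Bool // P s} :=
    fun p => ⟨p.1 ++ [Classical.choose (step p.1 p.2)], Classical.choose_spec (step p.1 p.2)⟩
  let S : ℕ → {s : List Bool // P s} := fun n => next^[n] ⟨[], hP0⟩
  have hSsucc : ∀ n, (S (n+1)).1 = (S n).1 ++ [Classical.choose (step (S n).1 (S n).2)] := by
    intro n
    show (next^[n+1] _).1 = _
    rw [Function.iterate_succ_apply']
  have hSlen : ∀ n, (S n).1.length = n := by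
    intro n
    induction n with
    | zero => rfl
    | succ n ih => simp [hSsucc n, ih]
  set x : ℕ → Bool := fun i => (S (i+1)).1.getD i false with hx
  have hlist : ∀ n, listOf x n = (S n).1 := by
    intro n
    induction n with
    | zero => simp [listOf]; exact (List.length_eq_zero_iff.mp (hSlen 0)).symm
    | succ n ih =>
      rw [listOf_succ, ih, hSsucc n]
      congr 1
      have hxn : x n = (S (n+1)).1.getD n false := rfl
      rw [hSsucc n] at hxn
      rw [hxn]
      rw [List.getD_eq_getElem?_getD]
      rw [List.getElem?_append_right (by rw [hSlen n])]
      simp [hSlen n]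
  exact ⟨x, fun n => by rw [hlist n]; exact (S n).2⟩

lemma bounded_of_small (h : Cardinal.aleph 2 ≤ bNumber) (U : Set (ℕ → ℕ))
    (hU : Cardinal.mk U ≤ Cardinal.aleph 1) :
    ∃ g : ℕ → ℕ, ∀ f ∈ U, {n | g n < f n}.Finite := by
  by_contra hcon
  push_neg at hcon
  have hmem : Cardinal.mk U ∈ {c | ∃ U : Set (ℕ → ℕ), Cardinal.mk U = c ∧
      ∀ g : ℕ → ℕ, ∃ f ∈ U, {n | g n < f n}.Infinite} := by
    refine ⟨U, rfl, fun g => ?_⟩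
    obtain ⟨f, hf, hinf⟩ := hcon g
    exact ⟨f, hf, (Set.not_infinite.mpr · hinf)⟩
  have h1 : bNumber ≤ Cardinal.mk U := csInf_le' hmem
  have h2 : Cardinal.aleph 1 < Cardinal.aleph 2 := by
    rw [Cardinal.aleph_lt_aleph]; norm_num
  exact absurd ((h.trans h1).trans hU) (not_le.mpr h2)

lemma countable_eventually_false :
    {x : ℕ → Bool | ∃ N, ∀ i, N ≤ i → x i = false}.Countable := by
  have : {x : ℕ → Bool | ∃ N, ∀ i, N ≤ i → x i = false} =
      ⋃ N : ℕ, {x | ∀ i, N ≤ i → x i = false} := by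
    ext x; simp
  rw [this]
  refine Set.countable_iUnion fun N => ?_
  rw [← Set.countable_coe_iff]
  have hinj : Function.Injective
      (fun x : {x : ℕ → Bool // ∀ i, N ≤ i → x i = false} => (fun j : Fin N => x.1 j)) := by
    rintro ⟨x, hx⟩ ⟨y, hy⟩ hxy
    ext i
    rcases Nat.lt_or_ge i N with hi | hi
    · exact congrFun hxy ⟨i, hi⟩
    · show x i = y i
      rw [hx i hi, hy i hi]
  exact hinj.countable

lemma infinite_of_unbounded_length {S : Set (List Bool)}
    (hS : ∀ N : ℕ, ∃ u ∈ S, N ≤ u.length) : S.Infinite := by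
  intro hfin
  obtain ⟨N, hN⟩ := (hfin.image List.length).bddAbove
  obtain ⟨u, huS, hu⟩ := hS (N + 1)
  have := hN (Set.mem_image_of_mem List.length huS)
  omega

end S18

theorem stmt18 (h : Cardinal.aleph 2 ≤ bNumber) :
    ¬ ∃ 𝒳 : Set (Set (List Bool)), ¬ 𝒳.Countable ∧ (∀ X ∈ 𝒳, X.Infinite) ∧
      ∀ A : Set (List Bool), IsNwdTree A → {X ∈ 𝒳 | (X ∩ A).Infinite}.Countable := by
  rintro ⟨𝒳, hunc, hinf, hLuzin⟩
  -- extract a subfamily of size ℵ₁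
  have hcard : Cardinal.aleph 1 ≤ Cardinal.mk 𝒳 := by
    by_contra hlt
    exact hunc ((Cardinal.countable_iff_lt_aleph_one 𝒳).mpr (not_le.mp hlt))
  obtain ⟨𝒴, h𝒴sub, h𝒴card⟩ := Cardinal.le_mk_iff_exists_subset.mp hcard
  -- choose a branch through each member of the subfamily
  have hbranch : ∀ X : ↥𝒴, ∃ x : ℕ → Bool,
      ∀ n, {u ∈ (X : Set (List Bool)) | S18.listOf x n <+: u}.Infinite :=
    fun X => S18.exists_branch (hinf X (h𝒴sub X.2))
  choose br hbr using hbranch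
  -- choose witnesses along each branch
  have hwit : ∀ (X : ↥𝒴) (n : ℕ), ∃ u, u ∈ (X : Set (List Bool)) ∧ S18.listOf (br X) n <+: u :=
    fun X n => (hbr X n).nonempty
  choose w hw1 hw2 using hwit
  -- associated functions, bounded thanks to 𝔟 ≥ ℵ₂
  set d : ↥𝒴 → ℕ → ℕ := fun X k => sInf {i | k < i ∧ br X i = true} with hd
  set F : ↥𝒴 → ℕ → ℕ := fun X n => max (w X n).length (d X n) with hF
  have hlerange : Cardinal.mk (Set.range F) ≤ Cardinal.aleph 1 := by
    rw [← h𝒴card]; exact Cardinal.mk_range_le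
  obtain ⟨g, hg⟩ := S18.bounded_of_small h (Set.range F) hlerange
  have hgdom : ∀ X : ↥𝒴, ∃ m, ∀ k, m ≤ k → F X k ≤ g k := by
    intro X
    obtain ⟨m, hm⟩ := (hg (F X) (Set.mem_range_self X)).bddAbove
    refine ⟨m + 1, fun k hk => ?_⟩
    by_contra hc
    push_neg at hc
    have := hm (show k ∈ {n | g n < F X n} from hc)
    omega
  -- a monotone majorant
  set G : ℕ → ℕ := fun n => (Finset.range (n+1)).sup g + n with hG
  have hGmono : Monotone G := by
    intro a b hab
    exact add_le_add (Finset.sup_mono (Finset.range_subset_range.mpr (by omega))) hab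
  have hGg : ∀ n, g n ≤ G n := fun n =>
    le_trans (Finset.le_sup (Finset.self_mem_range_succ n)) (Nat.le_add_right _ _)
  have hGid : ∀ n, n ≤ G n := fun n => Nat.le_add_left n _
  -- the sparse sequence of levels
  set lv : ℕ → ℕ := fun k => Nat.rec 0 (fun _ p => G p + 1) k with hlvdef
  have hlv : ∀ k, lv (k+1) = G (lv k) + 1 := fun k => rfl
  have hlvmono : StrictMono lv := by
    apply strictMono_nat_of_lt_succ
    intro k
    rw [hlv]
    have := hGid (lv k)
    omega
  have hlvge : ∀ k, k ≤ lv k := fun k => hlvmono.le_apply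
  -- key step: any "escapable" set of branches gives only countably many X's
  have key : ∀ C : Set (ℕ → Bool),
      (∀ s : List Bool, ∃ t₀ : List Bool, s <+: t₀ ∧ ∀ x ∈ C, S18.listOf x t₀.length ≠ t₀) →
      {X : ↥𝒴 | br X ∈ C}.Countable := by
    intro C hesc
    set A : Set (List Bool) :=
      {u | ∃ k, ∃ x ∈ C, u.length ≤ G (lv k) ∧ S18.listOf x (lv k) <+: u} with hA
    have hnwd : IsNwdTree A := by
      intro s
      obtain ⟨t₀, hst₀, ht₀⟩ := hesc s
      set L := G (lv t₀.length) + 1 with hLdef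
      have hLt₀ : t₀.length ≤ L :=
        le_trans (le_trans (hlvge t₀.length) (hGid (lv t₀.length))) (Nat.le_succ _)
      set t := t₀ ++ List.replicate (L - t₀.length) false with ht
      have htlen : t.length = L := by
        rw [ht, List.length_append, List.length_replicate]
        omega
      refine ⟨t, hst₀.trans (List.prefix_append _ _), ?_⟩
      rintro u ⟨k, x, hxC, hul, hpre⟩ htu
      have htu' := htu.length_le
      rcases Nat.lt_or_ge k (t₀.length + 1) with hk | hk
      · have h1 : G (lv k) ≤ G (lv t₀.length) := hGmono (hlvmono.monotone (by omega))
        omega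
      · have h1 : L ≤ lv k := by
          have := hlvmono.monotone hk
          rw [hlv] at this
          omega
        have h2 : t <+: S18.listOf x (lv k) :=
          List.prefix_of_prefix_length_le htu hpre
            (by rw [htlen, S18.listOf_length]; exact h1)
        have h3 : t₀ <+: S18.listOf x (lv k) := (List.prefix_append _ _).trans h2
        exact ht₀ x hxC (S18.agrees_of_prefix h3)
    have hcount := hLuzin A hnwd
    have hsub : {X : ↥𝒴 | br X ∈ C} ⊆ Subtype.val ⁻¹' {X ∈ 𝒳 | (X ∩ A).Infinite} := by
      intro X hXC
      refine ⟨h𝒴sub X.2, ?_⟩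
      obtain ⟨m, hm⟩ := hgdom X
      apply S18.infinite_of_unbounded_length
      intro N
      have hmk : m ≤ lv (m + N) := le_trans (Nat.le_add_right m N) (hlvge (m + N))
      refine ⟨w X (lv (m + N)), ⟨hw1 X (lv (m + N)), ?_⟩, ?_⟩
      · refine ⟨m + N, br X, hXC, ?_, hw2 X (lv (m + N))⟩
        have h1 : (w X (lv (m + N))).length ≤ F X (lv (m + N)) := le_max_left _ _
        have h2 : F X (lv (m + N)) ≤ g (lv (m + N)) := hm _ hmk
        exact le_trans (le_trans h1 h2) (hGg _)
      · have h1 : lv (m + N) ≤ (w X (lv (m + N))).length := by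
          have := (hw2 X (lv (m + N))).length_le
          simpa using this
        have h2 : N ≤ lv (m + N) := le_trans (Nat.le_add_left N m) (hlvge (m + N))
        omega
    exact (hcount.preimage Subtype.val_injective).mono hsub
  -- the fibers of `br` are countable
  have hfiber : ∀ x₀ : ℕ → Bool, {X : ↥𝒴 | br X = x₀}.Countable := by
    intro x₀
    have : {X : ↥𝒴 | br X = x₀} = {X : ↥𝒴 | br X ∈ ({x₀} : Set (ℕ → Bool))} := by
      ext X; simp
    rw [this]
    apply key
    intro s
    refine ⟨s ++ [!x₀ s.length], List.prefix_append _ _, ?_⟩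
    rintro x hx heq
    rw [Set.mem_singleton_iff] at hx
    subst hx
    have hlen : s.length < (S18.listOf x (s ++ [!x s.length]).length).length := by
      simp
    have hlen2 : s.length < (s ++ [!x s.length]).length := by simp
    have hval : (S18.listOf x (s ++ [!x s.length]).length)[s.length]? = some (x s.length) := by
      rw [List.getElem?_eq_getElem hlen, S18.listOf_getElem]
    rw [heq] at hval
    rw [List.getElem?_eq_getElem hlen2, List.getElem_append_right (le_refl s.length)] at hval
    simp at hval
  -- X's whose branch is eventually false form a countable set
  have hEcount : {X : ↥𝒴 | ∃ N, ∀ i, N ≤ i → br X i = false}.Countable := by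
    have heq : {X : ↥𝒴 | ∃ N, ∀ i, N ≤ i → br X i = false} =
        ⋃ x₀ ∈ {x : ℕ → Bool | ∃ N, ∀ i, N ≤ i → x i = false}, {X : ↥𝒴 | br X = x₀} := by
      ext X
      simp only [Set.mem_setOf_eq, Set.mem_iUnion]
      constructor
      · intro hX; exact ⟨br X, hX, rfl⟩
      · rintro ⟨x₀, hx₀, rfl⟩; exact hx₀
    rw [heq]
    exact S18.countable_eventually_false.biUnion fun x₀ _ => hfiber x₀
  -- X's whose branch hits `true` cofinally are covered by countably many good sets
  have hCm : ∀ m : ℕ,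
      {X : ↥𝒴 | br X ∈ {x : ℕ → Bool | ∀ k, m ≤ k → ∃ i, k < i ∧ i ≤ G k ∧ x i = true}}.Countable := by
    intro m
    apply key
    intro s
    set K := max m s.length with hK
    have hsK : s.length ≤ G K + 1 := le_trans (le_trans (le_max_right m s.length) (hGid K)) (Nat.le_succ _)
    refine ⟨s ++ List.replicate (G K + 1 - s.length) false, List.prefix_append _ _, ?_⟩
    intro x hx heq
    obtain ⟨i, hi1, hi2, hi3⟩ := hx K (le_max_left m s.length)
    have hilt : i < (s ++ List.replicate (G K + 1 - s.length) false).length := by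
      simp only [List.length_append, List.length_replicate]
      have : s.length ≤ K := le_max_right m s.length
      omega
    have hilt' : i < (S18.listOf x (s ++ List.replicate (G K + 1 - s.length) false).length).length := by
      simpa using hilt
    have hval : (S18.listOf x (s ++ List.replicate (G K + 1 - s.length) false).length)[i]? = some (x i) := by
      rw [List.getElem?_eq_getElem hilt', S18.listOf_getElem]
    rw [heq] at hval
    have hsi : s.length ≤ i := le_trans (le_max_right m s.length) (Nat.le_of_lt hi1)
    rw [List.getElem?_eq_getElem hilt, List.getElem_append_right hsi, List.getElem_replicate] at hval
    rw [hi3] at hval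
    simp at hval
  -- now everything is countable, contradiction
  have hcover : (Set.univ : Set ↥𝒴) ⊆
      {X : ↥𝒴 | ∃ N, ∀ i, N ≤ i → br X i = false} ∪
      ⋃ m : ℕ, {X : ↥𝒴 | br X ∈ {x : ℕ → Bool | ∀ k, m ≤ k → ∃ i, k < i ∧ i ≤ G k ∧ x i = true}} := by
    intro X _
    by_cases hE : ∃ N, ∀ i, N ≤ i → br X i = false
    · left; exact hE
    · right
      push_neg at hE
      obtain ⟨m, hm⟩ := hgdom X
      refine Set.mem_iUnion.mpr ⟨m, ?_⟩
      intro k hk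
      -- d X k is a true position beyond k
      have hne : {i | k < i ∧ br X i = true}.Nonempty := by
        obtain ⟨i, hi1, hi2⟩ := hE (k + 1)
        exact ⟨i, by omega, by simpa using hi2⟩
      have hmem := Nat.sInf_mem hne
      refine ⟨d X k, hmem.1, ?_, hmem.2⟩
      have h1 : d X k ≤ F X k := le_max_right _ _
      exact le_trans (le_trans h1 (hm k hk)) (hGg k)
  have huniv : (Set.univ : Set ↥𝒴).Countable :=
    Set.Countable.mono hcover (hEcount.union (Set.countable_iUnion hCm))
  have : Cardinal.mk ↥𝒴 ≤ Cardinal.aleph0 := by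
    have := Set.countable_univ_iff.mp huniv
    exact Cardinal.mk_le_aleph0
  rw [h𝒴card] at this
  exact absurd this (not_le.mpr Cardinal.aleph0_lt_aleph_one)
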